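/- Let m be root-like with distinguished index i and let n be root-like with distinguished index j, where i ≠ j, m(j) = 0, and n(i) = −p with p ≥ 0 an integer. Writing ad(y_m)(d) = y_m ∘ d − d ∘ y_m for a derivation d of R, one has ad(y_m)^q(y_n) ≠ 0 for every integer q with 0 ≤ q ≤ p, and ad(y_m)^q(y_n) = 0 for every integer q ≥ p + 1. -/

import Mathlib

open MvPolynomial

/-- For a "root-like" integer vector `m` with distinguished index `i`
(`m i = 1` and `m ϱ ≤ 0` for `ϱ ≠ i`), the unique ℂ-linear derivation `y_m` of
`MvPolynomial ι ℂ` with `y_m (X i) = ∏_{ϱ ≠ i} X ϱ ^ (−m ϱ)` and `y_m (X ϱ) = 0`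
for `ϱ ≠ i`. -/
noncomputable def yDer {ι : Type*} [Fintype ι] [DecidableEq ι] (m : ι → ℤ) (i : ι) :
    Derivation ℂ (MvPolynomial ι ℂ) (MvPolynomial ι ℂ) :=
  MvPolynomial.mkDerivation ℂ (fun ϱ =>
    if ϱ = i then ∏ ϱ' ∈ Finset.univ.erase i, (X ϱ' : MvPolynomial ι ℂ) ^ (-(m ϱ')).toNat
    else 0)

lemma prod_X_pow_eq_monomial' {ι : Type*} [DecidableEq ι] (s : Finset ι) (e : ι → ℕ) :
    ∏ ϱ ∈ s, (X ϱ : MvPolynomial ι ℂ) ^ e ϱ =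
      monomial (∑ ϱ ∈ s, Finsupp.single ϱ (e ϱ)) 1 := by
  induction s using Finset.induction with
  | empty => simp
  | @insert x s hx ih =>
      rw [Finset.prod_insert hx, Finset.sum_insert hx, ih, X_pow_eq_monomial,
        monomial_mul, one_mul]

lemma sum_single_apply' {ι : Type*} [DecidableEq ι] (s : Finset ι) (e : ι → ℕ) (k : ι) :
    (∑ ϱ ∈ s, Finsupp.single ϱ (e ϱ)) k = if k ∈ s then e k else 0 := by
  rw [Finset.sum_apply']
  simp [Finsupp.single_apply, Finset.sum_ite_eq' s k e]

/-- `yDer m i` is multiplication by the corresponding monomial composed with `∂/∂ X i`. -/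
lemma yDer_eq_smul_pderiv {ι : Type*} [Fintype ι] [DecidableEq ι] (m : ι → ℤ) (i : ι) :
    yDer m i = (monomial (∑ ϱ ∈ Finset.univ.erase i, Finsupp.single ϱ (-(m ϱ)).toNat)
        (1 : ℂ)) • pderiv (R := ℂ) i := by
  apply derivation_ext
  intro ϱ
  rw [yDer, mkDerivation_X, Derivation.smul_apply, smul_eq_mul]
  by_cases h : ϱ = i
  · subst h; simp [prod_X_pow_eq_monomial']
  · simp [h, pderiv_X_of_ne h]


/-- Let `m` be root-like with distinguished index `i` and `n` root-like
with distinguished index `j`, where `i ≠ j`, `m j = 0`, and `n i = −p` with `p ≥ 0`.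
Writing `ad d' = y_m ∘ d' − d' ∘ y_m`, one has `ad^[q] y_n ≠ 0` for `0 ≤ q ≤ p` and
`ad^[q] y_n = 0` for `q ≥ p + 1`. -/
theorem ad_yDer_pow
    {ι : Type*} [Fintype ι] [DecidableEq ι]
    (m n : ι → ℤ) (i j : ι) (hij : i ≠ j)
    (hmi : m i = 1) (hm : ∀ ϱ, ϱ ≠ i → m ϱ ≤ 0)
    (hnj : n j = 1) (hn : ∀ ϱ, ϱ ≠ j → n ϱ ≤ 0)
    (hmj : m j = 0) (p : ℤ) (hp : 0 ≤ p) (hni : n i = -p)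
    (ad : Derivation ℂ (MvPolynomial ι ℂ) (MvPolynomial ι ℂ) →
          Derivation ℂ (MvPolynomial ι ℂ) (MvPolynomial ι ℂ))
    (had : ∀ d f, ad d f = yDer m i (d f) - d (yDer m i f)) :
    (∀ q : ℕ, (q : ℤ) ≤ p → ad^[q] (yDer n j) ≠ 0) ∧
    (∀ q : ℕ, p + 1 ≤ (q : ℤ) → ad^[q] (yDer n j) = 0) := by
  set σM : ι →₀ ℕ := ∑ ϱ ∈ Finset.univ.erase i, Finsupp.single ϱ (-(m ϱ)).toNat with hσM
  set σP : ι →₀ ℕ := ∑ ϱ ∈ Finset.univ.erase j, Finsupp.single ϱ (-(n ϱ)).toNat with hσP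
  have hσMi : σM i = 0 := by
    rw [hσM, sum_single_apply']; simp
  have hσMj : σM j = 0 := by
    rw [hσM, sum_single_apply']; simp [hmj]
  have hσPi : σP i = p.toNat := by
    rw [hσP, sum_single_apply']
    simp [Finset.mem_erase, hij, hni]
  have hyM : yDer m i = (monomial σM (1 : ℂ)) • pderiv (R := ℂ) i := yDer_eq_smul_pderiv m i
  have hyN : yDer n j = (monomial σP (1 : ℂ)) • pderiv (R := ℂ) j := yDer_eq_smul_pderiv n j
  -- the key step
  have step : ∀ (s : ι →₀ ℕ) (a : ℂ),
      ad ((monomial s a) • pderiv (R := ℂ) j) =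
        (monomial (σM + (s - Finsupp.single i 1)) (a * s i)) • pderiv (R := ℂ) j := by
    intro s a
    apply derivation_ext
    intro ϱ
    rw [had, hyM]
    by_cases hϱj : ϱ = j
    · subst hϱj
      simp [Derivation.smul_apply, pderiv_X_of_ne (Ne.symm hij), smul_eq_mul,
        pderiv_monomial, monomial_mul]
    · by_cases hϱi : ϱ = i
      · subst hϱi
        simp [Derivation.smul_apply, pderiv_X_of_ne hϱj, smul_eq_mul,
          pderiv_monomial, hσMj, pderiv_X_self]
      · simp [Derivation.smul_apply, pderiv_X_of_ne hϱj, pderiv_X_of_ne hϱi, smul_eq_mul]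
  -- exponent sequence
  let F : ℕ → (ι →₀ ℕ) := fun q => Nat.rec σP (fun _ t => σM + (t - Finsupp.single i 1)) q
  have hF0 : F 0 = σP := rfl
  have hFsucc : ∀ q, F (q + 1) = σM + (F q - Finsupp.single i 1) := fun q => rfl
  have hFi : ∀ q, F q i = p.toNat - q := by
    intro q
    induction q with
    | zero => simpa [hF0] using hσPi
    | succ q ih =>
        rw [hFsucc, Finsupp.add_apply, Finsupp.tsub_apply, ih, hσMi,
          Finsupp.single_eq_same]
        omega
  have main : ∀ q : ℕ, ad^[q] (yDer n j) =
      (monomial (F q) ((p.toNat.descFactorial q : ℕ) : ℂ)) • pderiv (R := ℂ) j := by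
    intro q
    induction q with
    | zero => simpa [hF0] using hyN
    | succ q ih =>
        rw [Function.iterate_succ_apply', ih, step, hFsucc]
        congr 1
        rw [hFi, Nat.descFactorial_succ]
        push_cast
        ring
  constructor
  · intro q hq hzero
    rw [main] at hzero
    have h1 : (monomial (F q) ((p.toNat.descFactorial q : ℕ) : ℂ)) • pderiv (R := ℂ) j (X j)
        = (0 : Derivation ℂ (MvPolynomial ι ℂ) (MvPolynomial ι ℂ)) (X j) := by
      rw [← Derivation.smul_apply, hzero]
    rw [Derivation.zero_apply, pderiv_X_self, smul_eq_mul, mul_one,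
      monomial_eq_zero, Nat.cast_eq_zero, Nat.descFactorial_eq_zero_iff_lt] at h1
    have := Int.toNat_of_nonneg hp
    omega
  · intro q hq
    rw [main]
    have : p.toNat.descFactorial q = 0 := by
      rw [Nat.descFactorial_eq_zero_iff_lt]
      have := Int.toNat_of_nonneg hp
      omega
    rw [this, Nat.cast_zero, monomial_zero, zero_smul]
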